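/- Let γ ∈ (0,1) and b* = 1/(1-γ). The equation [ p · γb* / (γb* + 1 - p) ]^γ = p, for p in the interval [c, 1] with c = γ^{γ/(1-γ)}, has p = 1 as its unique solution; moreover for p ∈ [c, 1) the left-hand side is strictly larger than p. -/

import Mathlib

private lemma pgss_key (p t : ℝ) (hp0 : 0 < p) (hp1 : p < 1) (ht : 0 < t) :
    p ^ t * (1 + t * (1 - p)) < 1 := by
  have h1p : 0 < 1 - p := by linarith
  have h1 : 0 < 1 + t * (1 - p) := by positivity
  have hpt : 0 < p ^ t := Real.rpow_pos_of_pos hp0 t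
  have hlog : Real.log (p ^ t * (1 + t * (1 - p))) < 0 := by
    rw [Real.log_mul (ne_of_gt hpt) (ne_of_gt h1), Real.log_rpow hp0]
    have hA : Real.log p < p - 1 := Real.log_lt_sub_one_of_pos hp0 (ne_of_lt hp1)
    have hB : Real.log (1 + t * (1 - p)) ≤ t * (1 - p) := by
      have := Real.log_le_sub_one_of_pos h1; linarith
    nlinarith [mul_lt_mul_of_pos_left hA ht]
  exact (Real.log_neg_iff (by positivity)).1 hlog

private lemma pgss_strict (γ : ℝ) (hγ0 : 0 < γ) (hγ1 : γ < 1) (p : ℝ)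
    (hp0 : 0 < p) (hp1 : p < 1) :
    (p * (γ * (1 / (1 - γ))) / (γ * (1 / (1 - γ)) + 1 - p)) ^ γ > p := by
  have h1γ : 0 < 1 - γ := by linarith
  have hinvpos : 0 < 1 / (1 - γ) := by positivity
  have hinv : (1 - γ) * (1 / (1 - γ)) = 1 := by field_simp
  set t : ℝ := (1 - γ) / γ with ht_def
  have ht : 0 < t := by positivity
  have hγt : γ * t = 1 - γ := by rw [ht_def, mul_div_assoc', mul_div_cancel_left₀ _ (ne_of_gt hγ0)]
  have hs : 0 < p ^ t := Real.rpow_pos_of_pos hp0 t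
  set s : ℝ := p ^ t with hs_def
  have key := pgss_key p t hp0 hp1 ht
  have key' : γ * s + (1 - γ) * s * (1 - p) < γ := by
    have h := mul_lt_mul_of_pos_left key hγ0
    have heq : γ * (s * (1 + t * (1 - p))) = γ * s + (γ * t) * (s * (1 - p)) := by ring
    rw [heq, hγt, mul_one] at h
    linarith
  have hden : 0 < γ * (1 / (1 - γ)) + 1 - p := by
    have : 0 < γ * (1 / (1 - γ)) := by positivity
    linarith
  have h2 : s * (γ * (1 / (1 - γ)) + 1 - p) < γ * (1 / (1 - γ)) := by
    have h := mul_lt_mul_of_pos_left key' hinvpos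
    have heq : (1 / (1 - γ)) * (γ * s + (1 - γ) * s * (1 - p))
        = γ * (1 / (1 - γ)) * s + ((1 - γ) * (1 / (1 - γ))) * (s * (1 - p)) := by ring
    rw [heq, hinv] at h
    nlinarith
  have hlt : p ^ (1 / γ) < p * (γ * (1 / (1 - γ))) / (γ * (1 / (1 - γ)) + 1 - p) := by
    have hexp : (1 : ℝ) / γ = 1 + t := by rw [ht_def, one_add_div (ne_of_gt hγ0), add_sub_cancel]
    have hval : p ^ (1 / γ) = p * s := by
      rw [hexp, Real.rpow_add hp0, Real.rpow_one, hs_def]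
    rw [hval, lt_div_iff₀ hden]
    calc p * s * (γ * (1 / (1 - γ)) + 1 - p)
        = p * (s * (γ * (1 / (1 - γ)) + 1 - p)) := by ring
      _ < p * (γ * (1 / (1 - γ))) := mul_lt_mul_of_pos_left h2 hp0
  have hfin := Real.rpow_lt_rpow (Real.rpow_nonneg hp0.le _) hlt hγ0
  have hid : (p ^ (1 / γ)) ^ γ = p := by
    rw [← Real.rpow_mul hp0.le, one_div, inv_mul_cancel₀ (ne_of_gt hγ0), Real.rpow_one]
  rw [hid] at hfin
  exact hfin

theorem pgss_fixed_point_unique (γ : ℝ) (hγ0 : 0 < γ) (hγ1 : γ < 1) :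
    (∀ p : ℝ, p ∈ Set.Icc (γ ^ (γ / (1 - γ))) 1 →
      ((p * (γ * (1 / (1 - γ))) / (γ * (1 / (1 - γ)) + 1 - p)) ^ γ = p ↔ p = 1)) ∧
    (∀ p : ℝ, p ∈ Set.Ico (γ ^ (γ / (1 - γ))) 1 →
      (p * (γ * (1 / (1 - γ))) / (γ * (1 / (1 - γ)) + 1 - p)) ^ γ > p) := by
  have hc : 0 < γ ^ (γ / (1 - γ)) := Real.rpow_pos_of_pos hγ0 _
  have h1γ : 0 < 1 - γ := by linarith
  constructor
  · intro p hp
    obtain ⟨hpl, hpu⟩ := hp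
    have hp0 : 0 < p := lt_of_lt_of_le hc hpl
    constructor
    · intro hfix
      by_contra hne
      have hp1 : p < 1 := lt_of_le_of_ne hpu hne
      have := pgss_strict γ hγ0 hγ1 p hp0 hp1
      rw [hfix] at this
      exact lt_irrefl p this
    · intro hp1
      subst hp1
      have hB : γ * (1 / (1 - γ)) ≠ 0 := by positivity
      have : (1 : ℝ) * (γ * (1 / (1 - γ))) / (γ * (1 / (1 - γ)) + 1 - 1)
          = 1 := by
        field_simp
        rw [add_sub_cancel_right, div_self (ne_of_gt hγ0)]
      rw [this, Real.one_rpow]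
  · intro p hp
    obtain ⟨hpl, hpu⟩ := hp
    exact pgss_strict γ hγ0 hγ1 p (lt_of_lt_of_le hc hpl) hpu
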